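/- Let τ = (1+√5)/2, R = diag(e^{−4πi/5}, e^{3πi/5}), F = [[1/τ, 1/√τ],[1/√τ, −1/τ]]. Define M₀ = F·R^{−1}·F·R·F and inductively M_j = M_{j−1}·R^{−1}·M_{j−1}†·R³·M_{j−1}·R^{−3}·M_{j−1}†·R·M_{j−1}. Then |⟨0| M₀ |0⟩| = 1/τ², and for all j ≥ 0, |⟨0| M_j |0⟩| = (1/τ)^{2·5^j}. -/

import Mathlib

open Matrix Complex

noncomputable def fibR : Matrix (Fin 2) (Fin 2) ℂ :=
  !![Complex.exp (-4 * Real.pi * Complex.I / 5), 0; 0, Complex.exp (3 * Real.pi * Complex.I / 5)]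

noncomputable def fibF : Matrix (Fin 2) (Fin 2) ℂ :=
  !![(1 / ((1 + Real.sqrt 5) / 2) : ℝ), (1 / Real.sqrt ((1 + Real.sqrt 5) / 2) : ℝ);
     (1 / Real.sqrt ((1 + Real.sqrt 5) / 2) : ℝ), -(1 / ((1 + Real.sqrt 5) / 2) : ℝ)]

set_option maxRecDepth 10000 in
set_option maxHeartbeats 1000000 in
private lemma key_step (a b c d A B C D z : ℂ)
    (h1 : A*a + C*c = 1) (h3 : B*a + D*c = 0) (h4 : B*b + D*d = 1)
    (h6 : a*C + b*D = 0) (h8 : c*C + d*D = 1)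
    (hz : z^4 - z^3 + z^2 - z + 1 = 0) :
    (!![a,b;c,d] * !![z^4,0;0,z^7] * !![A,C;B,D] * !![z^18,0;0,z^9] * !![a,b;c,d] *
      !![z^12,0;0,z^21] * !![A,C;B,D] * !![z^6,0;0,z^3] * !![a,b;c,d]) 0 0 = a^3*A^2 := by
  simp only [Matrix.mul_fin_two, Matrix.of_apply, Matrix.cons_val', Matrix.cons_val_zero,
    Matrix.cons_val_one, Matrix.head_cons, Matrix.empty_val', Matrix.cons_val_fin_one,
    Matrix.head_fin_const]
  linear_combination ((-1)*b*c*d*D^2 + (-1)*b^2*c*B*D + (-1)*a*b*c*B*C + a*b*c*A*D + (-1)*a^2*d*B*C + (-1)*a^2*b*A*B + (-1)*a^3*A^2 + (-1)*z*b*c*d*D^2 + (-1)*z*b*c^2*C*D + (-1)*z*a*b*c*B*C + z*a*b*c*A*D + (-1)*z*a^2*d*B*C + (-1)*z*a^2*c*A*C + (-1)*z*a^3*A^2 + (-1)*z^2*b*c^2*C*D + z^2*a*c*d*C*D + z^2*a*b*c*A*D + (-1)*z^2*a*b^2*B^2 + z^3*a*c*d*C*D + z^3*a*c^2*C^2 +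 (-1)*z^3*a*b*d*B*D + (-1)*z^3*a*b^2*B^2 + z^3*a^2*c*A*C + (-1)*z^3*a^2*b*A*B + z^4*b^2*c*B*D + z^4*a*c^2*C^2 + (-1)*z^4*a*b*d*B*D + (-1)*z^4*a*b*c*A*D + z^5*b*c*d*D^2 + z^5*b^2*c*B*D + z^5*a*b*c*B*C + (-1)*z^5*a*b*c*A*D + z^5*a^2*d*B*C + z^5*a^2*b*A*B + z^5*a^3*A^2 + z^6*b*c*d*D^2 + z^6*b*c^2*C*D + z^6*a*b*c*B*C + (-1)*z^6*a*b*c*A*D + z^6*a^2*d*B*C + z^6*a^2*c*A*C + z^6*a^3*A^2 + z^7*b*c^2*C*D + (-1)*z^7*a*c*d*C*D + (-1)*z^7*a*b*c*A*D + z^7*a*b^2*B^2 + (-1)*z^8*a*c*d*C*D + (-1)*z^8*a*c^2*C^2 + z^8*a*b*d*B*D + z^8*a*b^2*B^2 + (-1)*z^8*a^2*c*A*C + z^8*a^2*b*A*B + (-1)*z^9*b^2*c*B*D + (-1)*z^9*a*c^2*C^2 + z^9*a*b*d*B*D + z^9*a*b*c*A*D + (-1)*z^10*b*c*d*D^2 +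 (-1)*z^10*b^2*c*B*D + (-1)*z^10*a*b*c*B*C + z^10*a*b*c*A*D + (-1)*z^10*a^2*d*B*C + (-1)*z^10*a^2*b*A*B + (-1)*z^10*a^3*A^2 + (-1)*z^11*b*c*d*D^2 + (-1)*z^11*b*c^2*C*D + (-1)*z^11*a*b*c*B*C + z^11*a*b*c*A*D + (-1)*z^11*a^2*d*B*C + (-1)*z^11*a^2*c*A*C + (-1)*z^11*a^3*A^2 + (-1)*z^12*b*c^2*C*D + z^12*a*c*d*C*D + z^12*a*b*c*A*D + (-1)*z^12*a*b^2*B^2 + z^13*a*c*d*C*D + z^13*a*c^2*C^2 + (-1)*z^13*a*b*d*B*D + (-1)*z^13*a*b^2*B^2 + z^13*a^2*c*A*C + (-1)*z^13*a^2*b*A*B + z^14*b^2*c*B*D + z^14*a*c^2*C^2 + (-1)*z^14*a*b*d*B*D + (-1)*z^14*a*b*c*A*D + z^15*b*c*d*D^2 + z^15*b^2*c*B*D + z^15*a*b*c*B*C + (-1)*z^15*a*b*c*A*D + z^15*a^2*d*B*C + z^15*a^2*b*A*B + z^15*a^3*A^2 + z^16*b*c*d*D^2 + z^16*b*c^2*C*D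 + z^16*a*b*c*B*C + (-1)*z^16*a*b*c*A*D + z^16*a^2*d*B*C + z^16*a^2*c*A*C + z^16*a^3*A^2 + z^17*b*c^2*C*D + (-1)*z^17*a*c*d*C*D + (-1)*z^17*a*b*c*A*D + z^17*a*b^2*B^2 + (-1)*z^18*a*c*d*C*D + (-1)*z^18*a*c^2*C^2 + z^18*a*b*d*B*D + z^18*a*b^2*B^2 + (-1)*z^18*a^2*c*A*C + z^18*a^2*b*A*B + (-1)*z^19*b^2*c*B*D + (-1)*z^19*a*c^2*C^2 + z^19*a*b*d*B*D + z^19*a*b*c*A*D + (-1)*z^20*b*c*d*D^2 + (-1)*z^20*b^2*c*B*D + (-1)*z^20*a*b*c*B*C + z^20*a*b*c*A*D + (-1)*z^20*a^2*d*B*C + (-1)*z^20*a^2*b*A*B + (-1)*z^20*a^3*A^2 + (-1)*z^21*b*c*d*D^2 + (-1)*z^21*b*c^2*C*D + (-1)*z^21*a*b*c*B*C + z^21*a*b*c*A*D + (-1)*z^21*a^2*d*B*C + (-1)*z^21*a^2*c*A*C + (-1)*z^21*a^3*A^2 + (-1)*z^22*b*c^2*C*D + z^22*a*c*d*C*D +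 z^22*a*b*c*A*D + (-1)*z^22*a*b^2*B^2 + z^23*a*c*d*C*D + z^23*a*c^2*C^2 + (-1)*z^23*a*b*d*B*D + (-1)*z^23*a*b^2*B^2 + z^23*a^2*c*A*C + (-1)*z^23*a^2*b*A*B + z^24*b^2*c*B*D + z^24*a*c^2*C^2 + (-1)*z^24*a*b*d*B*D + (-1)*z^24*a*b*c*A*D + z^25*b*c*d*D^2 + z^25*b^2*c*B*D + z^25*a*b*c*B*C + (-1)*z^25*a*b*c*A*D + z^25*a^2*d*B*C + z^25*a^2*b*A*B + z^25*a^3*A^2 + z^26*b*c*d*D^2 + z^26*b*c^2*C*D + z^26*a*b*c*B*C + (-1)*z^26*a*b*c*A*D + z^26*a^2*d*B*C + z^26*a^2*c*A*C + z^26*a^3*A^2 + z^27*b*c^2*C*D + (-1)*z^27*a*c*d*C*D + (-1)*z^27*a*b*c*A*D + z^27*a*b^2*B^2 + (-1)*z^28*a*c*d*C*D + z^28*a*b*d*B*D + z^28*a*b^2*B^2 + (-1)*z^28*a^2*c*A*C + z^28*a^2*b*A*B + (-1)*z^29*b^2*c*B*D + z^29*a*b*d*B*D + z^29*a*b*c*A*D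 + (-1)*z^30*b*c*d*D^2 + (-1)*z^30*b^2*c*B*D + (-1)*z^30*a*b*c*B*C + z^30*a*b*c*A*D + (-1)*z^30*a^2*d*B*C + (-1)*z^30*a^2*b*A*B + (-1)*z^30*a^3*A^2 + (-1)*z^31*b*c*d*D^2 + (-1)*z^31*a*b*c*B*C + z^31*a*b*c*A*D + (-1)*z^31*a^2*d*B*C + (-1)*z^31*a^3*A^2 + z^32*a*c*d*C*D + z^32*a*b*c*A*D + (-1)*z^32*a*b^2*B^2 + z^32*a^2*c*A*C + z^33*a*c*d*C*D + (-1)*z^33*a*b*d*B*D + (-1)*z^33*a*b^2*B^2 + z^33*a^2*c*A*C + (-1)*z^33*a^2*b*A*B + z^34*b^2*c*B*D + (-1)*z^34*a*b*d*B*D + z^35*b*c*d*D^2 + z^35*b^2*c*B*D + z^35*a*b*c*B*C + z^35*a^2*d*B*C + z^35*a^2*b*A*B + z^35*a^3*A^2 + z^36*b*c*d*D^2 + z^36*a*b*c*B*C + (-1)*z^36*a*b*c*A*D + z^36*a^2*d*B*C + z^36*a^3*A^2 + (-1)*z^37*a*b*c*A*D + z^37*a*b^2*B^2 + z^38*a*b*d*B*D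 + z^38*a*b^2*B^2 + z^38*a^2*b*A*B + (-1)*z^39*b^2*c*B*D + z^39*a*b*d*B*D + (-1)*z^40*b^2*c*B*D + (-1)*z^40*a^2*b*A*B + z^41*a*b*c*A*D + z^42*a*b*c*A*D + (-1)*z^42*a*b^2*B^2 + (-1)*z^43*a*b^2*B^2 + z^44*b^2*c*B*D + z^44*a^2*b*A*B + z^45*b^2*c*B*D + z^45*a^2*b*A*B + z^47*a*b^2*B^2 + z^48*a*b^2*B^2) * hz +
    ((-1)*b*c*D + a*b*B + z*a*c*C + (-1)*z*a*b*B + (-1)*z^2*b*c*D + (-1)*z^2*a*c*C + z^2*a*b*B + z^3*b*c*D) * h1 +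
    (b + a*d*C + (-1)*z*b + z*b*c*C + z^2*b + (-1)*z^2*b*c*C + z^2*b^2*B + z^3*b*d*D) * h3 +
    (b*c*D + (-1)*z*b*c*D + (-1)*z^3*b*c*D) * h4 +
    ((-1)*c*d*D + z*c + (-1)*z*c^2*C + (-1)*z^2*c + (-1)*z^2*c*d*D + z^2*c^2*C + (-1)*z^3*c^2*C) * h6 +
    (b*c*D + z*b*c*D + z^2*b*c*D) * h8

private lemma ct_fin_two (a b c d : ℂ) :
    (!![a,b;c,d])ᴴ = !![star a, star c; star b, star d] := by
  ext i j
  fin_cases i <;> fin_cases j <;> simp [Matrix.conjTranspose_apply]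

theorem stmt_12 (M : ℕ → Matrix (Fin 2) (Fin 2) ℂ)
    (h0 : M 0 = fibF * fibR⁻¹ * fibF * fibR * fibF)
    (hrec : ∀ j : ℕ, M (j + 1) =
      M j * fibR⁻¹ * (M j)ᴴ * fibR^3 * M j * (fibR⁻¹)^3 * (M j)ᴴ * fibR * M j) :
    ‖(M 0) 0 0‖ = 1 / ((1 + Real.sqrt 5) / 2)^2 ∧
    ∀ j : ℕ, ‖(M j) 0 0‖ = (1 / ((1 + Real.sqrt 5) / 2))^(2 * 5^j) := by
  have h5 : Real.sqrt 5 * Real.sqrt 5 = 5 := Real.mul_self_sqrt (by norm_num)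
  have hs0 : (0:ℝ) ≤ Real.sqrt 5 := Real.sqrt_nonneg 5
  have htpos : (0:ℝ) < (1 + Real.sqrt 5) / 2 := by positivity
  have htne : ((1 + Real.sqrt 5) / 2 : ℝ) ≠ 0 := ne_of_gt htpos
  have hsq : Real.sqrt ((1 + Real.sqrt 5) / 2) * Real.sqrt ((1 + Real.sqrt 5) / 2)
      = (1 + Real.sqrt 5) / 2 := Real.mul_self_sqrt htpos.le
  -- the tenth root of unity
  set z : ℂ := Complex.exp (Real.pi * Complex.I / 5) with hzdef
  have hz10 : z ^ 10 = 1 := by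
    rw [hzdef, ← Complex.exp_nat_mul,
      show ((10:ℕ):ℂ) * (Real.pi * Complex.I / 5) = 2 * Real.pi * Complex.I by push_cast; ring,
      Complex.exp_two_pi_mul_I]
  have hz5 : z ^ 5 = -1 := by
    rw [hzdef, ← Complex.exp_nat_mul,
      show ((5:ℕ):ℂ) * (Real.pi * Complex.I / 5) = Real.pi * Complex.I by push_cast; ring,
      Complex.exp_pi_mul_I]
  have hzim : z.im = Real.sin (Real.pi / 5) := by
    rw [hzdef, show (Real.pi * Complex.I / 5 : ℂ) = ((Real.pi / 5 : ℝ) : ℂ) * Complex.I by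
      push_cast; ring, Complex.exp_ofReal_mul_I_im]
  have hzne : z ≠ -1 := by
    intro h
    have h1 : z.im = 0 := by rw [h]; simp
    have h2 : 0 < Real.sin (Real.pi / 5) :=
      Real.sin_pos_of_pos_of_lt_pi (by positivity) (by linarith [Real.pi_pos])
    rw [hzim] at h1; linarith
  have hphi : z^4 - z^3 + z^2 - z + 1 = 0 := by
    have hfac : (z + 1) * (z^4 - z^3 + z^2 - z + 1) = 0 := by linear_combination hz5
    rcases mul_eq_zero.mp hfac with h' | h'
    · exact absurd (by linear_combination h') hzne
    · exact h'
  have hzz : star z * z = 1 := by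
    rw [hzdef, Complex.star_def, ← Complex.exp_conj, ← Complex.exp_add]
    rw [show (starRingEnd ℂ) (Real.pi * Complex.I / 5) + Real.pi * Complex.I / 5 = 0 by
      simp only [map_div₀, _root_.map_mul, Complex.conj_I, Complex.conj_ofReal, map_ofNat]
      ring]
    exact Complex.exp_zero
  have hzzn : ∀ n : ℕ, star (z ^ n) * z ^ n = 1 := by
    intro n; rw [star_pow, ← mul_pow, hzz, one_pow]
  -- z-forms of the R matrices
  have he1 : Complex.exp (-4 * Real.pi * Complex.I / 5) = z ^ 6 := by
    rw [hzdef, ← Complex.exp_nat_mul, Complex.exp_eq_exp_iff_exists_int]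
    exact ⟨-1, by push_cast; ring⟩
  have he2 : Complex.exp (3 * Real.pi * Complex.I / 5) = z ^ 3 := by
    rw [hzdef, ← Complex.exp_nat_mul, Complex.exp_eq_exp_iff_exists_int]
    exact ⟨0, by push_cast; ring⟩
  have hRz : fibR = !![z^6, 0; 0, z^3] := by
    unfold fibR; rw [he1, he2]
  have hRinv : fibR⁻¹ = !![z^4, 0; 0, z^7] := by
    apply Matrix.inv_eq_right_inv
    rw [hRz, Matrix.one_fin_two]
    ext i j
    fin_cases i <;> fin_cases j <;>
      simp only [Matrix.mul_apply, Fin.sum_univ_two, Fin.zero_eta, Fin.mk_one, Matrix.of_apply, Matrix.cons_val', Matrix.cons_val_zero, Matrix.cons_val_one, Matrix.head_cons, Matrix.empty_val', Matrix.cons_val_fin_one, Matrix.head_fin_const, mul_zero, zero_mul, add_zero, zero_add, star_zero] <;>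
      first
        | linear_combination hz10
        | rfl
  have hR3 : fibR ^ 3 = !![z^18, 0; 0, z^9] := by
    rw [hRz, pow_succ, pow_succ, pow_one]
    ext i j
    fin_cases i <;> fin_cases j <;>
      simp only [Matrix.mul_apply, Fin.sum_univ_two, Fin.zero_eta, Fin.mk_one, Matrix.of_apply, Matrix.cons_val', Matrix.cons_val_zero, Matrix.cons_val_one, Matrix.head_cons, Matrix.empty_val', Matrix.cons_val_fin_one, Matrix.head_fin_const, mul_zero, zero_mul, add_zero, zero_add, star_zero] <;>
      first
        | ring
        | rfl
  have hRi3 : (fibR⁻¹) ^ 3 = !![z^12, 0; 0, z^21] := by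
    rw [hRinv, pow_succ, pow_succ, pow_one]
    ext i j
    fin_cases i <;> fin_cases j <;>
      simp only [Matrix.mul_apply, Fin.sum_univ_two, Fin.zero_eta, Fin.mk_one, Matrix.of_apply, Matrix.cons_val', Matrix.cons_val_zero, Matrix.cons_val_one, Matrix.head_cons, Matrix.empty_val', Matrix.cons_val_fin_one, Matrix.head_fin_const, mul_zero, zero_mul, add_zero, zero_add, star_zero] <;>
      first
        | ring
        | rfl
  -- unitarity
  have hdiagmem : ∀ p q : ℕ, !![z^p, 0; 0, z^q] ∈ unitary (Matrix (Fin 2) (Fin 2) ℂ) := by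
    intro p q
    rw [Unitary.mem_iff]
    constructor <;>
    · rw [Matrix.star_eq_conjTranspose, ct_fin_two, Matrix.one_fin_two]
      ext i j
      fin_cases i <;> fin_cases j <;>
        simp only [Matrix.mul_apply, Fin.sum_univ_two, Fin.zero_eta, Fin.mk_one, Matrix.of_apply, Matrix.cons_val', Matrix.cons_val_zero, Matrix.cons_val_one, Matrix.head_cons, Matrix.empty_val', Matrix.cons_val_fin_one, Matrix.head_fin_const, mul_zero, zero_mul, add_zero, zero_add, star_zero] <;>
        first
          | exact hzzn _
          | (rw [mul_comm]; exact hzzn _)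
          | rfl
  have hkey : (1 / ((1 + Real.sqrt 5) / 2) : ℝ) * (1 / ((1 + Real.sqrt 5) / 2))
      + 1 / ((1 + Real.sqrt 5) / 2) = 1 := by
    field_simp
    ring_nf
    nlinarith [h5]
  have hyx : ((1 / Real.sqrt ((1 + Real.sqrt 5) / 2) : ℝ))
      * (1 / Real.sqrt ((1 + Real.sqrt 5) / 2)) = 1 / ((1 + Real.sqrt 5) / 2) := by
    rw [div_mul_div_comm, one_mul, hsq]
  have hx2R : (1 / ((1 + Real.sqrt 5) / 2) : ℝ) * (1 / ((1 + Real.sqrt 5) / 2))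
      + (1 / Real.sqrt ((1 + Real.sqrt 5) / 2)) * (1 / Real.sqrt ((1 + Real.sqrt 5) / 2))
      = 1 := by rw [hyx]; exact hkey
  have hx2 : ((1 / ((1 + Real.sqrt 5) / 2) : ℝ) : ℂ) * ((1 / ((1 + Real.sqrt 5) / 2) : ℝ) : ℂ)
      + ((1 / Real.sqrt ((1 + Real.sqrt 5) / 2) : ℝ) : ℂ) *
        ((1 / Real.sqrt ((1 + Real.sqrt 5) / 2) : ℝ) : ℂ) = 1 := by
    exact_mod_cast hx2R
  have hFmem : fibF ∈ unitary (Matrix (Fin 2) (Fin 2) ℂ) := by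
    have hFH : fibFᴴ = fibF := by
      unfold fibF
      ext i j
      fin_cases i <;> fin_cases j <;> simp [Matrix.conjTranspose_apply]
    have hFF : fibF * fibF = 1 := by
      unfold fibF
      rw [Matrix.one_fin_two]
      ext i j
      fin_cases i <;> fin_cases j <;>
        simp only [Matrix.mul_apply, Fin.sum_univ_two, Fin.zero_eta, Fin.mk_one, Matrix.of_apply, Matrix.cons_val', Matrix.cons_val_zero, Matrix.cons_val_one, Matrix.head_cons, Matrix.empty_val', Matrix.cons_val_fin_one, Matrix.head_fin_const, mul_zero, zero_mul, add_zero, zero_add, star_zero, Complex.ofReal_neg] <;>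
        first
          | linear_combination hx2
          | ring
          | rfl
    rw [Unitary.mem_iff, Matrix.star_eq_conjTranspose, hFH]
    exact ⟨hFF, hFF⟩
  have hRmem : fibR ∈ unitary (Matrix (Fin 2) (Fin 2) ℂ) := by
    rw [hRz]; exact hdiagmem 6 3
  have hRimem : fibR⁻¹ ∈ unitary (Matrix (Fin 2) (Fin 2) ℂ) := by
    rw [hRinv]; exact hdiagmem 4 7
  have huni : ∀ j, M j ∈ unitary (Matrix (Fin 2) (Fin 2) ℂ) := by
    intro j
    induction j with
    | zero =>
      rw [h0]
      exact mul_mem (mul_mem (mul_mem (mul_mem hFmem hRimem) hFmem) hRmem) hFmem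
    | succ n ih =>
      rw [hrec n]
      have hstar : (M n)ᴴ ∈ unitary (Matrix (Fin 2) (Fin 2) ℂ) := by
        rw [← Matrix.star_eq_conjTranspose]; exact Unitary.star_mem ih
      exact mul_mem (mul_mem (mul_mem (mul_mem (mul_mem (mul_mem (mul_mem (mul_mem ih hRimem)
        hstar) (pow_mem hRmem 3)) ih) (pow_mem hRimem 3)) hstar) hRmem) ih
  -- recursion identity on the (0,0) entry
  have hstep : ∀ j, M (j+1) 0 0 = (M j 0 0)^3 * (star (M j 0 0))^2 := by
    intro j
    have hU := Unitary.mem_iff.mp (huni j)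
    have hUU := hU.1
    have hUU' := hU.2
    have e1 := congrArg (fun X : Matrix (Fin 2) (Fin 2) ℂ => X 0 0) hUU
    have e3 := congrArg (fun X : Matrix (Fin 2) (Fin 2) ℂ => X 1 0) hUU
    have e4 := congrArg (fun X : Matrix (Fin 2) (Fin 2) ℂ => X 1 1) hUU
    have e6 := congrArg (fun X : Matrix (Fin 2) (Fin 2) ℂ => X 0 1) hUU'
    have e8 := congrArg (fun X : Matrix (Fin 2) (Fin 2) ℂ => X 1 1) hUU'
    simp only [Matrix.star_eq_conjTranspose, Matrix.mul_apply, Fin.sum_univ_two,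
      Matrix.conjTranspose_apply, Matrix.one_apply_eq, Matrix.one_apply_ne,
      Matrix.one_apply, reduceIte] at e1 e3 e4 e6 e8
    rw [if_neg (by decide)] at e3
    rw [if_neg (by decide)] at e6
    conv_lhs => rw [hrec j, hRi3, hR3, hRinv, hRz, Matrix.eta_fin_two (M j), ct_fin_two]
    exact key_step (M j 0 0) (M j 0 1) (M j 1 0) (M j 1 1)
      (star (M j 0 0)) (star (M j 0 1)) (star (M j 1 0)) (star (M j 1 1)) z
      (by linear_combination e1)
      (by linear_combination e3)
      (by linear_combination e4)
      (by linear_combination e6)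
      (by linear_combination e8)
      hphi
  -- base value
  have hcos : Real.cos (3 * (Real.pi / 5)) = (1 - Real.sqrt 5) / 4 := by
    rw [show 3 * (Real.pi / 5) = Real.pi - 2 * (Real.pi / 5) by ring, Real.cos_pi_sub,
      Real.cos_two_mul, Real.cos_pi_div_five]
    linear_combination (-1/8 : ℝ) * h5
  have hz3 : z ^ 3 = Complex.exp (((3 * (Real.pi / 5) : ℝ) : ℂ) * Complex.I) := by
    rw [hzdef, ← Complex.exp_nat_mul, Complex.exp_eq_exp_iff_exists_int]
    exact ⟨0, by push_cast; ring⟩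
  have hz7 : z ^ 7 = Complex.exp (-(((3 * (Real.pi / 5) : ℝ) : ℂ)) * Complex.I) := by
    rw [hzdef, ← Complex.exp_nat_mul, Complex.exp_eq_exp_iff_exists_int]
    exact ⟨1, by push_cast; ring⟩
  have hsum : z ^ 3 + z ^ 7 = (((1 - Real.sqrt 5) / 2 : ℝ) : ℂ) := by
    rw [hz3, hz7, Complex.exp_mul_I, Complex.exp_mul_I, Complex.cos_neg, Complex.sin_neg,
      ← Complex.ofReal_cos, hcos]
    push_cast
    ring
  have h00 : M 0 0 0 = -(((1 / ((1 + Real.sqrt 5) / 2) : ℝ) : ℂ)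
      * ((1 / ((1 + Real.sqrt 5) / 2) : ℝ) : ℂ)) := by
    rw [h0, hRinv, hRz]
    unfold fibF
    simp only [Matrix.mul_fin_two, Matrix.of_apply, Matrix.cons_val', Matrix.cons_val_zero,
      Matrix.cons_val_one, Matrix.head_cons, Matrix.empty_val', Matrix.cons_val_fin_one,
      Matrix.head_fin_const]
    have c2 : ((1 / Real.sqrt ((1 + Real.sqrt 5) / 2) : ℝ) : ℂ) *
        ((1 / Real.sqrt ((1 + Real.sqrt 5) / 2) : ℝ) : ℂ)
        = ((1 / ((1 + Real.sqrt 5) / 2) : ℝ) : ℂ) := by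
      exact_mod_cast hyx
    have c4 : ((1 / ((1 + Real.sqrt 5) / 2) : ℝ) : ℂ) * (((1 + Real.sqrt 5) / 2 : ℝ) : ℂ) = 1 := by
      exact_mod_cast (one_div_mul_cancel htne)
    have c6 : (((1 + Real.sqrt 5) / 2 : ℝ) : ℂ) ^ 2 = (((1 + Real.sqrt 5) / 2 : ℝ) : ℂ) + 1 := by
      exact_mod_cast (show (((1 + Real.sqrt 5) / 2 : ℝ)) ^ 2 = ((1 + Real.sqrt 5) / 2 : ℝ) + 1 by
        linear_combination (1/4 : ℝ) * h5)
    have c5 : (((1 - Real.sqrt 5) / 2 : ℝ) : ℂ) + (((1 + Real.sqrt 5) / 2 : ℝ) : ℂ) = 1 := by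
      push_cast; ring
    linear_combination (((1 / ((1 + Real.sqrt 5) / 2) : ℝ) : ℂ)^3 + ((1 / ((1 + Real.sqrt 5) / 2) : ℝ) : ℂ)*((1 / Real.sqrt ((1 + Real.sqrt 5) / 2) : ℝ) : ℂ)*((1 / Real.sqrt ((1 + Real.sqrt 5) / 2) : ℝ) : ℂ)*z^3 - ((1 / ((1 + Real.sqrt 5) / 2) : ℝ) : ℂ)*((1 / Real.sqrt ((1 + Real.sqrt 5) / 2) : ℝ) : ℂ)*((1 / Real.sqrt ((1 + Real.sqrt 5) / 2) : ℝ) : ℂ)) * hz10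
      + (((1 / ((1 + Real.sqrt 5) / 2) : ℝ) : ℂ)*(z^7+z^3-1)) * c2
      + ((1 / ((1 + Real.sqrt 5) / 2) : ℝ) : ℂ)^2 * hsum + ((1 / ((1 + Real.sqrt 5) / 2) : ℝ) : ℂ)^2*((((1 + Real.sqrt 5) / 2 : ℝ) : ℂ)-1) * c4 + ((1 / ((1 + Real.sqrt 5) / 2) : ℝ) : ℂ)^2 * c5 - ((1 / ((1 + Real.sqrt 5) / 2) : ℝ) : ℂ)^3 * c6
  have habs0 : ‖M 0 0 0‖ = 1 / ((1 + Real.sqrt 5) / 2) ^ 2 := by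
    rw [h00, ← Complex.ofReal_mul, norm_neg, Complex.norm_real, Real.norm_eq_abs,
      _root_.abs_of_nonneg (by positivity), div_mul_div_comm, one_mul, pow_two]
  -- induction
  have main : ∀ j : ℕ, ‖(M j) 0 0‖
      = (1 / ((1 + Real.sqrt 5) / 2)) ^ (2 * 5 ^ j) := by
    intro j
    induction j with
    | zero =>
      rw [habs0, show 2 * 5 ^ 0 = 2 by norm_num, one_div, one_div, inv_pow]
    | succ n ih =>
      rw [hstep n, norm_mul, norm_pow, norm_pow]
      rw [show ‖star (M n 0 0)‖ = ‖M n 0 0‖ by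
        exact norm_star _]
      rw [show ‖M n 0 0‖ ^ 3 * ‖M n 0 0‖ ^ 2
        = ‖M n 0 0‖ ^ 5 by ring, ih, ← pow_mul]
      congr 1
      ring
  exact ⟨habs0, main⟩
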